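/- arXiv:2503.03595 — 3 statements merged into one kernel-verified Lean document; each statement's English description precedes it below -/
import Mathlib

section
/- Let ξ be a standard Gaussian random variable and A, B real numbers. Then E[ξ · σ(A + Bξ)] = (1/2)(B + |B| erf(A/(√2 B))) when B ≠ 0, where σ(z) = max(z,0) and erf(x) = (2/√π)∫₀^x e^{−s²} ds. In particular E[ξ σ(A + Bξ)] has the same sign as B (strictly, when B ≠ 0). -/
open MeasureTheory ProbabilityTheory

/-- The error function `erf x = (2/√π) ∫₀^x e^{−s²} ds`. -/
noncomputable def errorFun (x : ℝ) : ℝ :=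
  (2 / Real.sqrt Real.pi) * ∫ s in (0 : ℝ)..x, Real.exp (-s ^ 2)

namespace GaussianReluAux

open Real Set Filter

noncomputable def phi (x : ℝ) : ℝ := (Real.sqrt (2 * Real.pi))⁻¹ * Real.exp (-(1/2) * x ^ 2)

noncomputable def Psi (x : ℝ) : ℝ := ∫ t in (0:ℝ)..x, phi t

lemma phi_cont : Continuous phi := by unfold phi; fun_prop

lemma pdf_eq : gaussianPDFReal 0 1 = phi := by
  ext x
  simp [gaussianPDFReal, phi]
  ring_nf
  left; trivial

lemma integral_gauss_density (g : ℝ → ℝ) :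
    ∫ x, g x ∂(gaussianReal 0 1) = ∫ x, phi x * g x := by
  rw [gaussianReal_of_var_ne_zero _ one_ne_zero]
  have h1 : (gaussianPDF 0 1) = fun x => (((gaussianPDFReal 0 1 x).toNNReal : NNReal) : ENNReal) := by
    ext x; rfl
  rw [h1, integral_withDensity_eq_integral_smul
    (f := fun x => (gaussianPDFReal 0 1 x).toNNReal) (measurable_gaussianPDFReal 0 1).real_toNNReal g]
  congr 1
  ext x
  rw [NNReal.smul_def, smul_eq_mul, Real.coe_toNNReal _ (gaussianPDFReal_nonneg 0 1 x), pdf_eq]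

lemma phi_hasDeriv (x : ℝ) : HasDerivAt phi (-x * phi x) x := by
  have h1 : HasDerivAt (fun x : ℝ => -(1/2) * x ^ 2) (-x) x := by
    have := (hasDerivAt_pow 2 x).const_mul (-(1/2) : ℝ)
    refine this.congr_deriv ?_; push_cast; ring
  have h2 := (h1.exp).const_mul (Real.sqrt (2 * Real.pi))⁻¹
  refine HasDerivAt.congr_deriv (f := phi) h2 ?_
  unfold phi; ring

lemma Psi_hasDeriv (x : ℝ) : HasDerivAt Psi (phi x) x :=
  (phi_cont.integral_hasStrictDerivAt 0 x).hasDerivAt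

lemma Psi_eq (x : ℝ) : Psi x = (1/2) * errorFun (x / Real.sqrt 2) := by
  have hs2 : (0:ℝ) < Real.sqrt 2 := Real.sqrt_pos.mpr two_pos
  have hsp : (0:ℝ) < Real.sqrt Real.pi := Real.sqrt_pos.mpr Real.pi_pos
  have key : ∀ t : ℝ, phi t = (Real.sqrt (2 * Real.pi))⁻¹ * Real.exp (-(t / Real.sqrt 2) ^ 2) := by
    intro t
    unfold phi
    congr 1
    rw [div_pow, Real.sq_sqrt (by norm_num : (2:ℝ) ≥ 0)]
    ring_nf
  unfold Psi errorFun
  rw [intervalIntegral.integral_congr (fun t _ => key t),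
    intervalIntegral.integral_const_mul,
    intervalIntegral.integral_comp_div (fun s => Real.exp (-s ^ 2)) (ne_of_gt hs2)]
  rw [zero_div, smul_eq_mul]
  rw [Real.sqrt_mul (by norm_num) Real.pi]
  field_simp

lemma errorFun_neg (x : ℝ) : errorFun (-x) = -errorFun x := by
  unfold errorFun
  have h := intervalIntegral.integral_comp_neg (a := (0:ℝ)) (b := x)
    (f := fun s => Real.exp (-s ^ 2))
  simp only [neg_sq, neg_zero] at h
  have e1 := intervalIntegral.integral_symm (a := -x) (b := (0:ℝ))
    (f := fun s => Real.exp (-s ^ 2)) (μ := volume)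
  rw [e1, ← h]
  ring

lemma integrable_exp_neg_sq : Integrable (fun s : ℝ => Real.exp (-s ^ 2)) := by
  have := integrable_exp_neg_mul_sq (b := 1) one_pos
  simpa using this

lemma int_Ioi_exp_neg_sq : ∫ s in Ioi (0:ℝ), Real.exp (-s ^ 2) = Real.sqrt Real.pi / 2 := by
  have := integral_gaussian_Ioi 1
  simpa using this

lemma errorFun_lt_one (x : ℝ) : errorFun x < 1 := by
  have hsp : (0:ℝ) < Real.sqrt Real.pi := Real.sqrt_pos.mpr Real.pi_pos
  have key : (∫ s in (0:ℝ)..x, Real.exp (-s ^ 2)) < Real.sqrt Real.pi / 2 := by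
    rcases le_or_gt x 0 with hx | hx
    · have : (∫ s in (0:ℝ)..x, Real.exp (-s ^ 2)) ≤ 0 := by
        rw [intervalIntegral.integral_symm]
        simp only [neg_nonpos]
        exact intervalIntegral.integral_nonneg hx (fun u _ => (Real.exp_pos _).le)
      linarith
    · rw [intervalIntegral.integral_of_le hx.le, ← int_Ioi_exp_neg_sq]
      have hsplit : (Ioi (0:ℝ)) = Ioc 0 x ∪ Ioi x := (Ioc_union_Ioi_eq_Ioi hx.le).symm
      have hdis : Disjoint (Ioc (0:ℝ) x) (Ioi x) := Ioc_disjoint_Ioi le_rfl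
      rw [hsplit, setIntegral_union hdis measurableSet_Ioi
        integrable_exp_neg_sq.integrableOn integrable_exp_neg_sq.integrableOn]
      have hpos : 0 < ∫ s in Ioi x, Real.exp (-s ^ 2) := by
        have h1 : (0:ℝ) < ∫ s in x..(x+1), Real.exp (-s ^ 2) :=
          intervalIntegral.intervalIntegral_pos_of_pos_on
            ((Continuous.intervalIntegrable (by fun_prop) _ _))
            (fun u _ => Real.exp_pos _) (by linarith)
        rw [intervalIntegral.integral_of_le (by linarith)] at h1
        have h2 : (∫ s in Ioc x (x+1), Real.exp (-s ^ 2)) ≤ ∫ s in Ioi x, Real.exp (-s ^ 2) := by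
          apply setIntegral_mono_set integrable_exp_neg_sq.integrableOn
            (Eventually.of_forall fun s => (Real.exp_pos _).le)
            (HasSubset.Subset.eventuallyLE Ioc_subset_Ioi_self)
        linarith
      linarith
  unfold errorFun
  calc (2 / Real.sqrt Real.pi) * ∫ s in (0:ℝ)..x, Real.exp (-s ^ 2)
      < (2 / Real.sqrt Real.pi) * (Real.sqrt Real.pi / 2) := by
        apply mul_lt_mul_of_pos_left key (by positivity)
    _ = 1 := by field_simp

lemma neg_one_lt_errorFun (x : ℝ) : -1 < errorFun x := by
  have := errorFun_lt_one (-x)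
  rw [errorFun_neg] at this
  linarith

lemma integrable_phi : Integrable phi :=
  (integrable_exp_neg_mul_sq (by norm_num : (0:ℝ) < 1/2)).const_mul _

lemma Psi_tendsto : Tendsto Psi atTop (nhds (1/2)) := by
  have h := intervalIntegral_tendsto_integral_Ioi 0 integrable_phi.integrableOn tendsto_id
  have hval : ∫ x in Ioi (0:ℝ), phi x = 1/2 := by
    unfold phi
    rw [MeasureTheory.integral_const_mul, integral_gaussian_Ioi]
    rw [show Real.pi / (1/2) = 2 * Real.pi by ring]
    have : (0:ℝ) < Real.sqrt (2 * Real.pi) := Real.sqrt_pos.mpr (by positivity)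
    field_simp
  rw [hval] at h
  exact h

lemma tendsto_xexp : Tendsto (fun x : ℝ => x * Real.exp (-(1/2) * x ^ 2)) atTop (nhds 0) := by
  have h := rpow_mul_exp_neg_mul_sq_isLittleO_exp_neg (by norm_num : (0:ℝ) < 1/2) 1
  have h2 : (fun x : ℝ => x * Real.exp (-(1/2) * x ^ 2)) =o[atTop]
      fun x : ℝ => Real.exp (-(1/2) * x) := by
    refine h.congr' ?_ (Eventually.of_forall fun _ => rfl)
    filter_upwards [eventually_gt_atTop (0:ℝ)] with x hx
    rw [Real.rpow_one]
  refine h2.trans_tendsto ?_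
  apply Real.tendsto_exp_atBot.comp
  exact (tendsto_const_mul_atBot_of_neg (by norm_num)).mpr tendsto_id

lemma tendsto_exp_to_zero : Tendsto (fun x : ℝ => Real.exp (-(1/2) * x ^ 2)) atTop (nhds 0) := by
  apply Real.tendsto_exp_atBot.comp
  have : Tendsto (fun x : ℝ => x ^ 2) atTop atTop := tendsto_pow_atTop two_ne_zero
  exact (tendsto_const_mul_atBot_of_neg (by norm_num)).mpr this

lemma tendsto_affine_phi (A B : ℝ) :
    Tendsto (fun x : ℝ => (A + B * x) * phi x) atTop (nhds 0) := by
  have h1 : Tendsto (fun x : ℝ => (Real.sqrt (2*Real.pi))⁻¹ *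
      (A * Real.exp (-(1/2) * x ^ 2) + B * (x * Real.exp (-(1/2) * x ^ 2)))) atTop
      (nhds ((Real.sqrt (2*Real.pi))⁻¹ * (A * 0 + B * 0))) := by
    exact (((tendsto_exp_to_zero.const_mul A).add (tendsto_xexp.const_mul B)).const_mul _)
  simp only [mul_zero, add_zero, zero_add] at h1
  apply h1.congr
  intro x
  unfold phi
  ring

lemma integrable_h (A B : ℝ) : Integrable (fun x : ℝ => phi x * (x * (A + B * x))) := by
  have hbound : ∀ x : ℝ, ‖phi x * (x * (A + B * x))‖ ≤
      (|A| + 4 * |B|) * Real.exp (-(1/4) * x ^ 2) := by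
    intro x
    have hphi_le : phi x ≤ Real.exp (-(1/2) * x ^ 2) := by
      unfold phi
      have h1 : (1:ℝ) ≤ Real.sqrt (2 * Real.pi) := by
        rw [show (1:ℝ) = Real.sqrt 1 by simp]
        apply Real.sqrt_le_sqrt; nlinarith [Real.pi_gt_three]
      nlinarith [Real.exp_pos (-(1/2) * x ^ 2),
        inv_le_one_of_one_le₀ h1, inv_pos.mpr (lt_of_lt_of_le one_pos h1)]
    have hphi_pos : 0 < phi x := by unfold phi; positivity
    rw [norm_mul, Real.norm_eq_abs, Real.norm_eq_abs, abs_of_pos hphi_pos]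
    have key : |x * (A + B * x)| ≤ (|A| + 4 * |B|) * Real.exp ((1/4) * x ^ 2) := by
      have e1 : (1/4) * x ^ 2 + 1 ≤ Real.exp ((1/4) * x ^ 2) := by
        have := Real.add_one_le_exp ((1/4) * x ^ 2)
        linarith
      have e2 : |x * (A + B * x)| ≤ |A| * |x| + |B| * x ^ 2 := by
        rw [abs_mul]
        have : |A + B * x| ≤ |A| + |B| * |x| := by
          calc |A + B * x| ≤ |A| + |B * x| := abs_add_le _ _
          _ = |A| + |B| * |x| := by rw [abs_mul]
        calc |x| * |A + B * x| ≤ |x| * (|A| + |B| * |x|) :=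
              mul_le_mul_of_nonneg_left this (abs_nonneg _)
          _ = |A| * |x| + |B| * (|x| * |x|) := by ring
          _ = |A| * |x| + |B| * x ^ 2 := by
              rw [show |x| * |x| = x ^ 2 by rw [abs_mul_abs_self]; ring]
      have e3 : |x| ≤ 1 + (1/4) * x ^ 2 := by nlinarith [sq_nonneg (|x| - 2), sq_abs x]
      nlinarith [abs_nonneg A, abs_nonneg B, abs_nonneg x, Real.exp_pos ((1/4) * x ^ 2)]
    calc phi x * |x * (A + B * x)|
        ≤ Real.exp (-(1/2) * x ^ 2) * ((|A| + 4 * |B|) * Real.exp ((1/4) * x ^ 2)) := by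
          apply mul_le_mul hphi_le key (abs_nonneg _) (Real.exp_pos _).le
      _ = (|A| + 4 * |B|) * Real.exp (-(1/4) * x ^ 2) := by
          rw [show (-(1/4) * x ^ 2 : ℝ) = (-(1/2) * x ^ 2) + (1/4) * x ^ 2 by ring, Real.exp_add]
          ring
  apply Integrable.mono'
    ((integrable_exp_neg_mul_sq (by norm_num : (0:ℝ) < 1/4)).const_mul (|A| + 4 * |B|))
  · apply Continuous.aestronglyMeasurable; unfold phi; fun_prop
  · exact Eventually.of_forall hbound

/-- The main computation for `B > 0`. -/
lemma key_pos (A B : ℝ) (hB : 0 < B) :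
    (∫ ξ, ξ * max (A + B * ξ) 0 ∂(gaussianReal 0 1)) =
      (1 / 2) * (B + B * errorFun (A / (Real.sqrt 2 * B))) := by
  set c : ℝ := -A / B with hc
  have hABc : A + B * c = 0 := by rw [hc]; field_simp; ring
  rw [integral_gauss_density]
  have hind : (fun x : ℝ => phi x * (x * max (A + B * x) 0)) =
      Set.indicator (Ioi c) (fun x => phi x * (x * (A + B * x))) := by
    ext x
    by_cases hx : x ∈ Ioi c
    · have hpos : 0 < A + B * x := by
        have : c < x := hx
        nlinarith
      rw [Set.indicator_of_mem hx, max_eq_left hpos.le]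
    · have hle : A + B * x ≤ 0 := by
        simp only [mem_Ioi, not_lt] at hx
        nlinarith
      rw [Set.indicator_of_notMem hx, max_eq_right hle, mul_zero, mul_zero]
  rw [hind, integral_indicator measurableSet_Ioi]
  -- FTC on (c, ∞) with antiderivative F
  set F : ℝ → ℝ := fun x => B * Psi x - (A + B * x) * phi x with hF
  have hderiv : ∀ x ∈ Ici c, HasDerivAt F (phi x * (x * (A + B * x))) x := by
    intro x _
    have h1 := (Psi_hasDeriv x).const_mul B
    have h2 := ((hasDerivAt_const x A).add ((hasDerivAt_id x).const_mul B)).mul (phi_hasDeriv x)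
    have := h1.sub h2
    refine HasDerivAt.congr_deriv (f := F) this ?_
    simp only [id_eq, Pi.add_apply]
    ring
  have htend : Tendsto F atTop (nhds (B * (1/2) - 0)) :=
    (Psi_tendsto.const_mul B).sub (tendsto_affine_phi A B)
  have hint : IntegrableOn (fun x => phi x * (x * (A + B * x))) (Ioi c) :=
    (integrable_h A B).integrableOn
  rw [integral_Ioi_of_hasDerivAt_of_tendsto' hderiv hint htend]
  rw [hF]
  simp only [hABc, zero_mul, sub_zero]
  rw [Psi_eq]
  have hc2 : c / Real.sqrt 2 = -(A / (Real.sqrt 2 * B)) := by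
    rw [hc, neg_div, neg_div, div_div, mul_comm]
  rw [hc2, errorFun_neg]
  ring

lemma meas_g (A B : ℝ) : Continuous (fun x : ℝ => x * max (A + B * x) 0) := by
  apply continuous_id.mul
  exact (continuous_const.add (continuous_const.mul continuous_id)).max continuous_const

/-- The main computation for all `B ≠ 0`. -/
lemma key_eq (A B : ℝ) (hB : B ≠ 0) :
    (∫ ξ, ξ * max (A + B * ξ) 0 ∂(gaussianReal 0 1)) =
      (1 / 2) * (B + |B| * errorFun (A / (Real.sqrt 2 * B))) := by
  rcases hB.lt_or_gt with hB | hB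
  · -- negative case: substitute x ↦ -x
    have hmap : (gaussianReal 0 1).map (fun x => (-1 : ℝ) * x) = gaussianReal 0 1 := by
      rw [gaussianReal_map_const_mul (-1)]
      norm_num
    have hstep : (∫ ξ, ξ * max (A + B * ξ) 0 ∂(gaussianReal 0 1)) =
        ∫ x, (-1 * x) * max (A + B * (-1 * x)) 0 ∂(gaussianReal 0 1) := by
      conv_lhs => rw [← hmap]
      rw [integral_map (by fun_prop) (Continuous.aestronglyMeasurable (meas_g A B))]
    rw [hstep]
    have h2 : (∫ x, (-1 * x) * max (A + B * (-1 * x)) 0 ∂(gaussianReal 0 1)) =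
        ∫ x, -(x * max (A + (-B) * x) 0) ∂(gaussianReal 0 1) := by
      congr 1
      ext x
      have : A + B * (-1 * x) = A + (-B) * x := by ring
      rw [this]
      ring
    rw [h2, integral_neg, key_pos A (-B) (by linarith)]
    have hs2 : (0:ℝ) < Real.sqrt 2 := Real.sqrt_pos.mpr two_pos
    have he : A / (Real.sqrt 2 * (-B)) = -(A / (Real.sqrt 2 * B)) := by
      field_simp
    rw [he, errorFun_neg, abs_of_neg hB]
    ring
  · rw [key_pos A B hB, abs_of_pos hB]

end GaussianReluAux

/-- For `ξ` a standard Gaussian and reals `A`, `B` with `B ≠ 0`,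
`E[ξ σ(A + Bξ)] = (1/2)(B + |B| erf(A/(√2 B)))` where `σ` is the ReLU; in
particular this expectation has (strictly) the same sign as `B`. -/
theorem gaussian_relu_correlation (A B : ℝ) (hB : B ≠ 0) :
    (∫ ξ, ξ * max (A + B * ξ) 0 ∂(gaussianReal 0 1)) =
        (1 / 2) * (B + |B| * errorFun (A / (Real.sqrt 2 * B))) ∧
      (0 < B → 0 < ∫ ξ, ξ * max (A + B * ξ) 0 ∂(gaussianReal 0 1)) ∧
      (B < 0 → (∫ ξ, ξ * max (A + B * ξ) 0 ∂(gaussianReal 0 1)) < 0) := by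
  have heq := GaussianReluAux.key_eq A B hB
  have h1 := GaussianReluAux.errorFun_lt_one (A / (Real.sqrt 2 * B))
  have h2 := GaussianReluAux.neg_one_lt_errorFun (A / (Real.sqrt 2 * B))
  refine ⟨heq, ?_, ?_⟩
  · intro hBpos
    rw [heq, abs_of_pos hBpos]
    nlinarith
  · intro hBneg
    rw [heq, abs_of_neg hBneg]
    nlinarith
end

section
/- Let K(w,b) = E_x[y(x) σ(w^⊤x + b)] where σ is ReLU, x = √(ᾱ) x_0 + √(1−ᾱ) ξ with x_0 coordinates bounded by 1 in absolute value, ξ ~ N(0, I), y(x) = ξ^{(i)} (the i-th noise coordinate), and the constraint ‖w‖² + b² = 1. Then |K(w,b)| ≤ √(1−ᾱ). -/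
open MeasureTheory ProbabilityTheory

open Real
open scoped ENNReal NNReal

noncomputable def stdPDF : ℝ → ℝ := gaussianPDFReal 0 1

lemma stdPDF_eq (x : ℝ) : stdPDF x = (Real.sqrt (2 * π))⁻¹ * Real.exp (-(1/2) * x ^ 2) := by
  show gaussianPDFReal 0 1 x = _
  rw [gaussianPDFReal]
  push_cast
  congr 2
  · ring
  · ring

lemma gauss_withDensity :
    gaussianReal 0 1 = volume.withDensity (fun x => ((stdPDF x).toNNReal : ℝ≥0∞)) := by
  rw [gaussianReal_of_var_ne_zero 0 one_ne_zero]
  rfl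

lemma stdPDF_meas : Measurable (fun x => (stdPDF x).toNNReal) :=
  (measurable_gaussianPDFReal 0 1).real_toNNReal

lemma integral_gauss_eq (g : ℝ → ℝ) :
    ∫ x, g x ∂(gaussianReal 0 1) = ∫ x, stdPDF x * g x := by
  rw [gauss_withDensity, integral_withDensity_eq_integral_smul stdPDF_meas]
  congr 1; ext x
  simp [NNReal.smul_def, Real.coe_toNNReal _ (gaussianPDFReal_nonneg 0 1 x), stdPDF]

lemma integrable_gauss_iff (g : ℝ → ℝ) :
    Integrable g (gaussianReal 0 1) ↔ Integrable (fun x => stdPDF x * g x) := by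
  rw [gauss_withDensity, integrable_withDensity_iff_integrable_smul stdPDF_meas]
  constructor <;> intro h <;>
  · refine h.congr (Filter.Eventually.of_forall fun x => ?_)
    simp [NNReal.smul_def, Real.coe_toNNReal _ (gaussianPDFReal_nonneg 0 1 x), stdPDF]

lemma integrable_stdPDF_mul_sq : Integrable (fun x => stdPDF x * x ^ 2) := by
  have h := (integrable_rpow_mul_exp_neg_mul_sq (b := 1/2) (by norm_num) (s := 2) (by norm_num)).const_mul (Real.sqrt (2 * π))⁻¹
  refine h.congr (Filter.Eventually.of_forall fun x => ?_)
  simp only [stdPDF_eq, Real.rpow_two]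
  ring

lemma integral_sq_exp : ∫ x : ℝ, x ^ 2 * Real.exp (-(1/2) * x ^ 2) = Real.sqrt (2 * π) := by
  have hu : ∀ x : ℝ, HasDerivAt (fun y : ℝ => y) 1 x := fun x => hasDerivAt_id x
  have hv : ∀ x : ℝ, HasDerivAt (fun y : ℝ => -Real.exp (-(1/2) * y ^ 2))
      (x * Real.exp (-(1/2) * x ^ 2)) x := by
    intro x
    have h1 : HasDerivAt (fun y : ℝ => -(1/2) * y ^ 2) (-(1/2) * (2 * x)) x := by
      simpa using ((hasDerivAt_pow 2 x).const_mul (-(1/2) : ℝ))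
    have h2 := (h1.exp).fun_neg
    exact h2.congr_deriv (by ring)
  have huv' : Integrable ((fun y : ℝ => y) * fun x => x * Real.exp (-(1/2) * x ^ 2)) := by
    have h := integrable_rpow_mul_exp_neg_mul_sq (b := 1/2) (by norm_num) (s := 2) (by norm_num)
    refine h.congr (Filter.Eventually.of_forall fun x => ?_)
    simp only [Real.rpow_two, Pi.mul_apply]
    ring
  have hu'v : Integrable ((fun _ : ℝ => (1:ℝ)) * fun y : ℝ => -Real.exp (-(1/2) * y ^ 2)) := by
    have h := (integrable_exp_neg_mul_sq (b := 1/2) (by norm_num)).neg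
    refine h.congr (Filter.Eventually.of_forall fun x => ?_)
    simp [Pi.mul_apply]
  have huv : Integrable ((fun y : ℝ => y) * fun y : ℝ => -Real.exp (-(1/2) * y ^ 2)) := by
    have h := (integrable_mul_exp_neg_mul_sq (b := 1/2) (by norm_num)).neg
    refine h.congr (Filter.Eventually.of_forall fun x => ?_)
    simp [Pi.mul_apply]
  have key := integral_mul_deriv_eq_deriv_mul_of_integrable (fun x _ => hu x) (fun x _ => hv x) huv' hu'v huv
  have h2 : ∫ x : ℝ, Real.exp (-(1/2) * x ^ 2) = Real.sqrt (2 * π) := by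
    rw [integral_gaussian]
    congr 1
    ring
  calc ∫ x : ℝ, x ^ 2 * Real.exp (-(1/2) * x ^ 2)
      = ∫ x : ℝ, x * (x * Real.exp (-(1/2) * x ^ 2)) := by congr 1; ext x; ring
    _ = -∫ x : ℝ, 1 * -Real.exp (-(1/2) * x ^ 2) := key
    _ = ∫ x : ℝ, Real.exp (-(1/2) * x ^ 2) := by
        rw [← integral_neg]; congr 1; ext x; ring
    _ = Real.sqrt (2 * π) := h2

lemma integral_sq_gauss : ∫ x, x ^ 2 ∂(gaussianReal 0 1) = 1 := by
  rw [integral_gauss_eq]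
  have : ∫ x, stdPDF x * x ^ 2 = (Real.sqrt (2 * π))⁻¹ * ∫ x : ℝ, x ^ 2 * Real.exp (-(1/2) * x ^ 2) := by
    rw [← integral_const_mul]
    congr 1; ext x; rw [stdPDF_eq]; ring
  rw [this, integral_sq_exp, inv_mul_cancel₀]
  positivity

lemma integrable_sq_gauss : Integrable (fun x : ℝ => x ^ 2) (gaussianReal 0 1) :=
  (integrable_gauss_iff _).mpr integrable_stdPDF_mul_sq

lemma integral_id_gauss : ∫ x, x ∂(gaussianReal 0 1) = 0 := by
  rw [integral_gauss_eq]
  have hodd : ∀ x : ℝ, stdPDF (-x) * (-x) = -(stdPDF x * x) := by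
    intro x
    rw [stdPDF_eq, stdPDF_eq]
    ring_nf
  have h := integral_neg_eq_self (fun x : ℝ => stdPDF x * x) volume
  have h2 : ∫ x : ℝ, stdPDF (-x) * (-x) = -∫ x : ℝ, stdPDF x * x := by
    simp_rw [hodd]; exact integral_neg _
  rw [h] at h2
  linarith

lemma measurable_update_zero {d : ℕ} (i : Fin d) :
    Measurable (fun y : Fin d → ℝ => Function.update y i 0) := by
  refine measurable_pi_lambda _ fun j => ?_
  simp only [Function.update_apply]
  by_cases h : j = i
  · simp only [h, if_pos rfl]; exact measurable_const
  · simp only [if_neg h]; exact measurable_pi_apply j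

lemma aux_zero {Ω : Type*} [MeasurableSpace Ω] (μ : Measure Ω) [IsProbabilityMeasure μ]
    (d : ℕ) (i : Fin d) (ξ : Ω → Fin d → ℝ) (hξm : Measurable ξ)
    (hgi : Measure.map (fun ω => ξ ω i) μ = gaussianReal 0 1)
    (hiid : iIndepFun (fun j ω => ξ ω j) μ)
    (G : (Fin d → ℝ) → ℝ) (hG : Measurable G) :
    ∫ ω, ξ ω i * G (Function.update (ξ ω) i 0) ∂μ = 0 := by
  classical
  have hmeas : ∀ j, Measurable fun ω => ξ ω j := fun j => (measurable_pi_apply j).comp hξm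
  set T : Finset (Fin d) := {i}ᶜ with hT
  have hST := hiid.indepFun_finset {i} T disjoint_compl_right hmeas
  set K : ({x // x ∈ T} → ℝ) → (Fin d → ℝ) :=
    fun t j => if h : j ∈ T then t ⟨j, h⟩ else 0 with hKdef
  have hK : Measurable K := by
    refine measurable_pi_lambda _ fun j => ?_
    by_cases h : j ∈ T
    · simp only [hKdef, dif_pos h]; exact measurable_pi_apply _
    · simp only [hKdef, dif_neg h]; exact measurable_const
  have hE : Measurable (fun t : ({x // x ∈ ({i} : Finset (Fin d))} → ℝ) =>
      t ⟨i, Finset.mem_singleton_self i⟩) := measurable_pi_apply _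
  have hI := hST.comp hE (hG.comp hK)
  have heq : ((G ∘ K) ∘ (fun ω (j : {x // x ∈ T}) => ξ ω (j : Fin d)))
      = fun ω => G (Function.update (ξ ω) i 0) := by
    funext ω
    simp only [Function.comp_apply]
    congr 1
    funext j
    by_cases h : j = i
    · subst h
      have : j ∉ T := by simp [hT]
      simp [hKdef, dif_neg this]
    · have hmem : j ∈ T := by simp [hT, h]
      simp [hKdef, dif_pos hmem, Function.update_of_ne h]
  have heq2 : ((fun t : ({x // x ∈ ({i} : Finset (Fin d))} → ℝ) =>
      t ⟨i, Finset.mem_singleton_self i⟩) ∘ (fun ω (j : {x // x ∈ ({i} : Finset (Fin d))}) => ξ ω (j : Fin d)))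
      = fun ω => ξ ω i := rfl
  rw [heq, heq2] at hI
  have hmean : ∫ ω, ξ ω i ∂μ = 0 := by
    have h := integral_map (μ := μ) (hmeas i).aemeasurable
      (f := fun x : ℝ => x) aestronglyMeasurable_id
    rw [hgi] at h
    rw [← h, integral_id_gauss]
  rw [hI.integral_fun_mul_eq_mul_integral (hmeas i).aestronglyMeasurable
    ((hG.comp ((measurable_update_zero i).comp hξm)).aestronglyMeasurable), hmean, zero_mul]

lemma aux_hg0 {Ω : Type*} [MeasurableSpace Ω] (μ : Measure Ω) [IsProbabilityMeasure μ]
    (d : ℕ) (i : Fin d) (x₀ ξ : Ω → Fin d → ℝ) (hx₀m : Measurable x₀) (hξm : Measurable ξ)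
    (hgi : Measure.map (fun ω => ξ ω i) μ = gaussianReal 0 1)
    (hiid : iIndepFun (fun j ω => ξ ω j) μ)
    (hindep : IndepFun x₀ ξ μ)
    (H : (Fin d → ℝ) → (Fin d → ℝ) → ℝ) (hH : Measurable (Function.uncurry H))
    (hint : Integrable (fun ω => ξ ω i * H (x₀ ω) (Function.update (ξ ω) i 0)) μ) :
    ∫ ω, ξ ω i * H (x₀ ω) (Function.update (ξ ω) i 0) ∂μ = 0 := by
  classical
  set Φ : (Fin d → ℝ) × (Fin d → ℝ) → ℝ :=
    fun p => p.2 i * H p.1 (Function.update p.2 i 0) with hΦdef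
  have hΦm : Measurable Φ := by
    apply Measurable.mul
    · exact (measurable_pi_apply i).comp measurable_snd
    · exact hH.comp (measurable_fst.prodMk ((measurable_update_zero i).comp measurable_snd))
  have hpair : AEMeasurable (fun ω => (x₀ ω, ξ ω)) μ := (hx₀m.prodMk hξm).aemeasurable
  have hmap : ∫ ω, ξ ω i * H (x₀ ω) (Function.update (ξ ω) i 0) ∂μ
      = ∫ p, Φ p ∂(Measure.map (fun ω => (x₀ ω, ξ ω)) μ) := by
    rw [integral_map hpair hΦm.aestronglyMeasurable]
  have hP : Measure.map (fun ω => (x₀ ω, ξ ω)) μ = (Measure.map x₀ μ).prod (Measure.map ξ μ) :=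
    (indepFun_iff_map_prod_eq_prod_map_map hx₀m.aemeasurable hξm.aemeasurable).mp hindep
  have hΦint : Integrable Φ (Measure.map (fun ω => (x₀ ω, ξ ω)) μ) := by
    rw [integrable_map_measure hΦm.aestronglyMeasurable hpair]
    exact hint
  rw [hmap, hP]
  rw [MeasureTheory.integral_prod _ (hP ▸ hΦint)]
  have inner : ∀ a, ∫ y, Φ (a, y) ∂(Measure.map ξ μ) = 0 := by
    intro a
    have hFm : Measurable (fun y : Fin d → ℝ => y i * H a (Function.update y i 0)) := by
      apply Measurable.mul (measurable_pi_apply i)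
      exact (hH.comp (measurable_const.prodMk measurable_id)).comp (measurable_update_zero i)
    have h1 : ∫ y, Φ (a, y) ∂(Measure.map ξ μ)
        = ∫ ω, ξ ω i * H a (Function.update (ξ ω) i 0) ∂μ := by
      rw [integral_map hξm.aemeasurable hFm.aestronglyMeasurable]
    rw [h1]
    exact aux_zero μ d i ξ hξm hgi hiid (fun z => H a z)
      (hH.comp (measurable_const.prodMk measurable_id))
  simp only [inner, integral_zero]

/-- The growth-rate function `K(w,b) = E[ξ⁽ⁱ⁾ σ(wᵀx + b)]`, with
`x = √ᾱ x₀ + √(1−ᾱ) ξ`, `|x₀⁽ʲ⁾| ≤ 1`, `ξ` having i.i.d. standard Gaussian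
coordinates independent of `x₀`, and `‖w‖² + b² = 1`, satisfies
`|K(w,b)| ≤ √(1−ᾱ)`. -/
theorem growth_rate_bound
    {Ω : Type*} [MeasurableSpace Ω] (μ : Measure Ω) [IsProbabilityMeasure μ]
    (d : ℕ) (i : Fin d) (α : ℝ) (hα : α ∈ Set.Ioo (0 : ℝ) 1)
    (x₀ ξ : Ω → Fin d → ℝ) (hx₀m : Measurable x₀) (hξm : Measurable ξ)
    (hbdd : ∀ ω j, |x₀ ω j| ≤ 1)
    (hgauss : ∀ j, Measure.map (fun ω => ξ ω j) μ = gaussianReal 0 1)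
    (hiid : iIndepFun (fun j ω => ξ ω j) μ)
    (hindep : IndepFun x₀ ξ μ)
    (w : Fin d → ℝ) (b : ℝ) (hwb : (∑ j, (w j) ^ 2) + b ^ 2 = 1) :
    |∫ ω, ξ ω i *
        max ((∑ j, w j * (Real.sqrt α * x₀ ω j + Real.sqrt (1 - α) * ξ ω j)) + b) 0 ∂μ|
      ≤ Real.sqrt (1 - α) := by
  classical
  set s1 : ℝ := Real.sqrt α with hs1def
  set s2 : ℝ := Real.sqrt (1 - α) with hs2def
  have hs2 : 0 ≤ s2 := Real.sqrt_nonneg _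
  set f : Ω → ℝ := fun ω =>
    ξ ω i * max ((∑ j, w j * (s1 * x₀ ω j + s2 * ξ ω j)) + b) 0 with hfdef
  set g : Ω → ℝ := fun ω =>
    ξ ω i * max ((∑ j, w j * (s1 * x₀ ω j + s2 * Function.update (ξ ω) i 0 j)) + b) 0 with hgdef
  show |∫ ω, f ω ∂μ| ≤ s2
  by_cases hfint : Integrable f μ
  · -- pointwise bound on |f - g|
    have hbnd : ∀ ω, |f ω - g ω| ≤ (s2 * |w i|) * (ξ ω i) ^ 2 := by
      intro ω
      have hdiff : ((∑ j, w j * (s1 * x₀ ω j + s2 * ξ ω j)) + b)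
          - ((∑ j, w j * (s1 * x₀ ω j + s2 * Function.update (ξ ω) i 0 j)) + b)
          = s2 * (w i * ξ ω i) := by
        have : ((∑ j, w j * (s1 * x₀ ω j + s2 * ξ ω j)) + b)
            - ((∑ j, w j * (s1 * x₀ ω j + s2 * Function.update (ξ ω) i 0 j)) + b)
            = ∑ j, (w j * (s1 * x₀ ω j + s2 * ξ ω j)
              - w j * (s1 * x₀ ω j + s2 * Function.update (ξ ω) i 0 j)) := by
          rw [Finset.sum_sub_distrib]; ring
        rw [this, Finset.sum_eq_single i]
        · rw [Function.update_self]; ring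
        · intro j _ hj; rw [Function.update_of_ne hj]; ring
        · intro h; exact absurd (Finset.mem_univ i) h
      have h1 : |f ω - g ω| ≤ |ξ ω i| * (s2 * (|w i| * |ξ ω i|)) := by
        rw [hfdef, hgdef]
        simp only
        rw [← mul_sub, abs_mul]
        refine mul_le_mul_of_nonneg_left ?_ (abs_nonneg _)
        refine (abs_max_sub_max_le_abs _ _ _).trans_eq ?_
        rw [hdiff, abs_mul, abs_mul, abs_of_nonneg hs2]
      refine h1.trans_eq ?_
      rw [← sq_abs]
      ring
    have hmeasξi : Measurable fun ω => ξ ω i := (measurable_pi_apply i).comp hξm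
    -- integrability of ξ_i ^ 2 and its integral
    have hsqint : Integrable (fun ω => (ξ ω i) ^ 2) μ := by
      have h := integrable_sq_gauss
      rw [← hgauss i] at h
      exact (integrable_map_measure
        (measurable_id.pow_const 2).aestronglyMeasurable hmeasξi.aemeasurable).mp h
    have hsqval : ∫ ω, (ξ ω i) ^ 2 ∂μ = 1 := by
      have h := integral_map (μ := μ) hmeasξi.aemeasurable
        (f := fun x : ℝ => x ^ 2) (measurable_id.pow_const 2).aestronglyMeasurable
      rw [hgauss i, integral_sq_gauss] at h
      exact h.symm
    -- measurability of f and g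
    have hgm : Measurable g := by
      rw [hgdef]
      apply Measurable.mul hmeasξi
      apply Measurable.max _ measurable_const
      apply Measurable.add_const _ b
      apply Finset.measurable_sum
      intro j _
      apply Measurable.const_mul
      apply Measurable.add
      · exact (((measurable_pi_apply j).comp hx₀m).const_mul s1)
      · exact (((measurable_pi_apply j).comp ((measurable_update_zero i).comp hξm)).const_mul s2)
    have hsubm : Measurable (fun ω => f ω - g ω) := by
      apply Measurable.sub _ hgm
      rw [hfdef]
      apply Measurable.mul hmeasξi
      apply Measurable.max _ measurable_const
      apply Measurable.add_const _ b
      apply Finset.measurable_sum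
      intro j _
      apply Measurable.const_mul
      exact (((measurable_pi_apply j).comp hx₀m).const_mul s1).add
        (((measurable_pi_apply j).comp hξm).const_mul s2)
    have hsubint : Integrable (fun ω => f ω - g ω) μ := by
      refine Integrable.mono' (hsqint.const_mul (s2 * |w i|)) hsubm.aestronglyMeasurable ?_
      exact Filter.Eventually.of_forall fun ω => by
        simpa [Real.norm_eq_abs] using hbnd ω
    have hgint : Integrable g μ := by
      have h := hfint.sub hsubint
      refine h.congr (Filter.Eventually.of_forall fun ω => ?_)
      simp only [Pi.sub_apply]
      ring
    -- ∫ g = 0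
    have hg0 : ∫ ω, g ω ∂μ = 0 := by
      have hH : Measurable (Function.uncurry
          (fun a z : Fin d → ℝ => max ((∑ j, w j * (s1 * a j + s2 * z j)) + b) 0)) := by
        have huncurry : Function.uncurry
            (fun a z : Fin d → ℝ => max ((∑ j, w j * (s1 * a j + s2 * z j)) + b) 0)
            = fun p : (Fin d → ℝ) × (Fin d → ℝ) =>
              max ((∑ j, w j * (s1 * p.1 j + s2 * p.2 j)) + b) 0 := rfl
        rw [huncurry]
        exact ((Finset.measurable_sum Finset.univ (fun j _ =>
          (by fun_prop : Measurable fun p : (Fin d → ℝ) × (Fin d → ℝ) =>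
              w j * (s1 * p.1 j + s2 * p.2 j)))).add_const b).max measurable_const
      exact aux_hg0 μ d i x₀ ξ hx₀m hξm (hgauss i) hiid hindep
        (fun a z => max ((∑ j, w j * (s1 * a j + s2 * z j)) + b) 0) hH hgint
    have h1 : ∫ ω, f ω ∂μ = ∫ ω, (f ω - g ω) ∂μ := by
      rw [integral_sub hfint hgint, hg0, sub_zero]
    have hwi : |w i| ≤ 1 := by
      have hs : w i ^ 2 ≤ ∑ j, w j ^ 2 :=
        Finset.single_le_sum (fun j _ => sq_nonneg (w j)) (Finset.mem_univ i)
      have : w i ^ 2 ≤ 1 := by nlinarith [sq_nonneg b]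
      exact (sq_le_one_iff_abs_le_one (w i)).mp this
    have key : |∫ ω, f ω ∂μ| ≤ s2 * |w i| := by
      rw [h1]
      calc |∫ ω, (f ω - g ω) ∂μ| ≤ ∫ ω, |f ω - g ω| ∂μ :=
            by simpa [Real.norm_eq_abs] using
              norm_integral_le_integral_norm (μ := μ) (fun ω : Ω => f ω - g ω)
        _ ≤ ∫ ω, (s2 * |w i|) * (ξ ω i) ^ 2 ∂μ := by
            refine integral_mono hsubint.abs (hsqint.const_mul _) fun ω => hbnd ω
        _ = (s2 * |w i|) * ∫ ω, (ξ ω i) ^ 2 ∂μ := integral_const_mul _ _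
        _ = s2 * |w i| := by rw [hsqval, mul_one]
    exact key.trans (mul_le_of_le_one_right hs2 hwi)
  · rw [integral_undef hfint]
    simpa using hs2
end

section
/- Let z: ℝ≥0 → ℝ^n ∖ {0} be differentiable and let K: S^{n-1} → ℝ be continuously differentiable on the unit sphere. If dz/ds = c(s) · G(s) where c(s) > 0 and the spherical gradient satisfies ∇_{S} K(z/‖z‖) = (I − zz^⊤/‖z‖²) G(s), then d/ds K(z(s)/‖z(s)‖) = c(s)/‖z(s)‖ · ‖(I − zz^⊤/‖z‖²) G(s)‖² ≥ 0, i.e., the growth-rate function K is nondecreasing along the normalized trajectory. -/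
open scoped RealInnerProductSpace

/-- If `dz/ds = c(s)·G(s)` with `c(s) > 0`, `K` has gradient `gK(s)` at the
normalized point `z/‖z‖`, and the spherical (tangential) gradient of `K` at
`z/‖z‖` agrees with the tangential projection of `G(s)`, then
`d/ds K(z/‖z‖) = (c(s)/‖z(s)‖)·‖(I − zzᵀ/‖z‖²)G(s)‖² ≥ 0`: the growth rate `K`
is nondecreasing along the normalized trajectory. -/
theorem growth_rate_nondecreasing
    (n : ℕ) (z G : ℝ → EuclideanSpace ℝ (Fin n)) (c : ℝ → ℝ)
    (K : EuclideanSpace ℝ (Fin n) → ℝ) (gK : ℝ → EuclideanSpace ℝ (Fin n))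
    (hz : ∀ s, z s ≠ 0)
    (hc : ∀ s, 0 < c s)
    (hz' : ∀ s, HasDerivAt z (c s • G s) s)
    (hK : ∀ s, HasGradientAt K (gK s) (‖z s‖⁻¹ • z s))
    (hsph : ∀ s,
      gK s - (⟪z s, gK s⟫ / ‖z s‖ ^ 2) • z s
        = G s - (⟪z s, G s⟫ / ‖z s‖ ^ 2) • z s) :
    ∀ s,
      HasDerivAt (fun t => K (‖z t‖⁻¹ • z t))
        (c s / ‖z s‖ * ‖G s - (⟪z s, G s⟫ / ‖z s‖ ^ 2) • z s‖ ^ 2) s ∧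
      0 ≤ c s / ‖z s‖ * ‖G s - (⟪z s, G s⟫ / ‖z s‖ ^ 2) • z s‖ ^ 2 := by
  intro s
  have hns : ‖z s‖ ≠ 0 := norm_ne_zero_iff.mpr (hz s)
  have hnpos : (0:ℝ) < ‖z s‖ := norm_pos_iff.mpr (hz s)
  set w : EuclideanSpace ℝ (Fin n) := G s - (⟪z s, G s⟫ / ‖z s‖ ^ 2) • z s with hw
  -- derivative of the norm
  have hnsq : HasDerivAt (fun t => ‖z t‖ ^ 2) (2 * ⟪z s, c s • G s⟫) s :=
    (hz' s).norm_sq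
  have hnsq0 : (‖z s‖ : ℝ) ^ 2 ≠ 0 := pow_ne_zero 2 hns
  have hnorm : HasDerivAt (fun t => ‖z t‖) (⟪z s, c s • G s⟫ / ‖z s‖) s := by
    have h := hnsq.sqrt hnsq0
    have heq : (fun t => Real.sqrt (‖z t‖ ^ 2)) = fun t => ‖z t‖ := by
      funext t; exact Real.sqrt_sq (norm_nonneg _)
    rw [heq] at h
    convert h using 1
    rw [Real.sqrt_sq (norm_nonneg _)]
    ring
  have hinv : HasDerivAt (fun t => ‖z t‖⁻¹)
      (-(⟪z s, c s • G s⟫ / ‖z s‖) / ‖z s‖ ^ 2) s := hnorm.inv hns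
  have hf := hinv.smul (hz' s)
  -- the derivative of the normalized curve equals (c s / ‖z s‖) • w
  have hv : ‖z s‖⁻¹ • c s • G s + (-(⟪z s, c s • G s⟫ / ‖z s‖) / ‖z s‖ ^ 2) • z s
      = (c s / ‖z s‖) • w := by
    rw [hw, real_inner_smul_right]
    match_scalars
    · field_simp
    · field_simp
  rw [hv] at hf
  -- chain rule
  have hchain := (hK s).hasFDerivAt.comp_hasDerivAt s hf
  -- ⟪z s, w⟫ = 0
  have hzw : ⟪z s, w⟫ = 0 := by
    rw [hw, inner_sub_right, real_inner_smul_right, real_inner_self_eq_norm_sq]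
    field_simp
    ring
  -- ⟪gK s, w⟫ = ‖w‖²
  have hkey : ⟪gK s, w⟫ = ‖w‖ ^ 2 := by
    have h1 : ⟪gK s - (⟪z s, gK s⟫ / ‖z s‖ ^ 2) • z s, w⟫ = ⟪gK s, w⟫ := by
      rw [inner_sub_left, real_inner_smul_left, hzw, mul_zero, sub_zero]
    rw [← h1, hsph s, ← hw, real_inner_self_eq_norm_sq]
  have hval : (InnerProductSpace.toDual ℝ (EuclideanSpace ℝ (Fin n)) (gK s))
      ((c s / ‖z s‖) • w) = c s / ‖z s‖ * ‖w‖ ^ 2 := by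
    rw [InnerProductSpace.toDual_apply_apply, real_inner_smul_right, hkey]
  constructor
  · rw [← hval]
    exact hchain
  · have := hc s
    positivity
end
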